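/- arXiv:1310.6727 — 2 statements merged into one kernel-verified Lean document; each statement's English description precedes it below -/
import Mathlib

section
/- Let K be a number field, T a finite set of places of K, ζ a generator of the torsion subgroup of O_T^×, and ε₁, …, ε_r elements of O_T^× generating O_T^× modulo torsion. Then for every Δ ∈ O_T^× and every integer M ≥ 1 there exist ω ∈ O_T^× and integers 0 ≤ k₀, k₁, …, k_r < M such that ω^M · Δ = ζ^{k₀} · ε₁^{k₁} ⋯ ε_r^{k_r}; in particular h(ω^M·Δ) ≤ M · Σ_{i=1}^r h(ε_i). -/
open scoped NNReal
open IsDedekindDomain NumberField Polynomial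

namespace Effective

noncomputable section

variable {K : Type*} [Field K] [NumberField K]

/-- The cardinality `N(v)` of the residue field at a finite place `v`. -/
def placeNorm (v : HeightOneSpectrum (𝓞 K)) : ℕ := Ideal.absNorm v.asIdeal

lemma placeNorm_ne_zero (v : HeightOneSpectrum (𝓞 K)) : (placeNorm v : ℝ≥0) ≠ 0 := by
  have : Finite (𝓞 K ⧸ v.asIdeal) := Ideal.finiteQuotientOfFreeOfNeBot v.asIdeal v.ne_bot
  simpa [placeNorm] using (Ideal.absNorm_ne_zero_iff v.asIdeal).mpr this

/-- The residue characteristic of a finite place. -/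
def resChar (v : HeightOneSpectrum (𝓞 K)) : ℕ := ringChar (𝓞 K ⧸ v.asIdeal)

/-- The normalized `v`-adic absolute value `|x|_v = N(v)^{-ord_v x}`. -/
def vAbs (v : HeightOneSpectrum (𝓞 K)) (x : K) : ℝ :=
  WithZeroMulInt.toNNReal (placeNorm_ne_zero v) (v.valuation K x)

/-- The absolute multiplicative Weil height of a point `(x 0, …, x (m-1)) ∈ Kᵐ`. -/
def mulHeight {m : ℕ} (x : Fin m → K) : ℝ :=
  ((∏ w : InfinitePlace K, (⨆ i, w (x i)) ^ w.mult) *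
      ∏ᶠ v : HeightOneSpectrum (𝓞 K), ⨆ i, vAbs v (x i)) ^
    ((Module.finrank ℚ K : ℝ)⁻¹)

/-- The absolute logarithmic Weil height of a point of `Kᵐ`. -/
def logHeight {m : ℕ} (x : Fin m → K) : ℝ := Real.log (mulHeight x)

/-- The absolute logarithmic Weil height of `α ∈ K`. -/
def logHeight₁ (α : K) : ℝ := logHeight ![1, α]

/-- The absolute multiplicative Weil height of `α ∈ K`. -/
def mulHeight₁ (α : K) : ℝ := mulHeight ![1, α]

/-- The absolute logarithmic Weil height of a polynomial, i.e. of the point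
`(1, c₀, …, c_n)` formed by `1` and its coefficients. -/
def polyLogHeight (f : K[X]) : ℝ :=
  logHeight (Fin.cons 1 fun i : Fin (f.natDegree + 1) => f.coeff i)

/-- The Sylvester matrix of two polynomials `p`, `q` with formal degrees `m`, `l`. -/
def sylvester (m l : ℕ) (p q : K[X]) : Matrix (Fin (l + m)) (Fin (l + m)) K :=
  Matrix.of fun i j =>
    if (i : ℕ) < l then
      (if (i : ℕ) ≤ (j : ℕ) ∧ (j : ℕ) ≤ (i : ℕ) + m then p.coeff (m + i - j) else 0)
    else
      (if (i : ℕ) - l ≤ (j : ℕ) ∧ (j : ℕ) ≤ ((i : ℕ) - l) + l then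
        q.coeff (l + ((i : ℕ) - l) - j) else 0)

/-- The discriminant of a polynomial over a field (of characteristic zero), defined by
`Δ(f) = (-1)^(n(n-1)/2) lc(f)⁻¹ Res(f, f')`. -/
def polyDisc (f : K[X]) : K :=
  (-1 : K) ^ (f.natDegree * (f.natDegree - 1) / 2) * f.leadingCoeff⁻¹ *
    (sylvester f.natDegree (f.natDegree - 1) f (derivative f)).det

/-- The binary form `Σ_{i=0}^n β_i X^{n-i} Y^i` of degree `n` with coefficients `β`. -/
def binForm (n : ℕ) (β : Fin (n + 1) → K) : MvPolynomial (Fin 2) K :=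
  ∑ i : Fin (n + 1),
    MvPolynomial.C (β i) * MvPolynomial.X 0 ^ (n - (i : ℕ)) * MvPolynomial.X 1 ^ (i : ℕ)

/-- The `i`-th coefficient `β_i` (coefficient of `X^{n-i} Y^i`) of a binary form of degree `n`. -/
def bfCoeff (n : ℕ) (G : MvPolynomial (Fin 2) K) (i : Fin (n + 1)) : K :=
  MvPolynomial.coeff (Finsupp.single 0 (n - (i : ℕ)) + Finsupp.single 1 (i : ℕ)) G

/-- The pullback `ψ*G (X,Y) = G(αX + βY, γX + δY)` of a binary form by a matrix
`ψ = (α β; γ δ)`. -/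
def pullback (ψ : Matrix (Fin 2) (Fin 2) K) (G : MvPolynomial (Fin 2) K) :
    MvPolynomial (Fin 2) K :=
  MvPolynomial.bind₁
    (fun j : Fin 2 => MvPolynomial.C (ψ j 0) * MvPolynomial.X 0 +
      MvPolynomial.C (ψ j 1) * MvPolynomial.X 1) G

open scoped Classical in
/-- The discriminant of the binary form with coefficient vector `β`; writing the form as
`Y^k · (homogenization of g)` with `g(X) = G(X,1)`, it is `Δ(g)` if `k = 0`, it is
`lc(g)² Δ(g)` if `k = 1`, and it is `0` if `k ≥ 2`. -/
def discBF (n : ℕ) (β : Fin (n + 1) → K) : K :=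
  let g : K[X] := ∑ i : Fin (n + 1), Polynomial.C (β i) * Polynomial.X ^ (n - (i : ℕ))
  if g.natDegree = n then polyDisc g
  else if g ≠ 0 ∧ g.natDegree = n - 1 then g.leadingCoeff ^ 2 * polyDisc g
  else 0

/-- The absolute logarithmic Weil height of a binary form of degree `n`, i.e. the height of
the point `(1, β₀, …, β_n)`. -/
def bfLogHeight (n : ℕ) (G : MvPolynomial (Fin 2) K) : ℝ :=
  logHeight (Fin.cons 1 (bfCoeff n G))

/-- The absolute multiplicative Weil height of a binary form of degree `n`. -/
def bfMulHeight (n : ℕ) (G : MvPolynomial (Fin 2) K) : ℝ :=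
  mulHeight (Fin.cons 1 (bfCoeff n G))

/-- The ring of `T`-integers of `K`, for a finite set `T` of finite places of `K`. -/
def SInt (T : Finset (HeightOneSpectrum (𝓞 K))) : Subalgebra (𝓞 K) K :=
  Set.integer (T : Set (HeightOneSpectrum (𝓞 K))) K

/-- `x ∈ K` is a unit of the ring of `T`-integers `O_T`. -/
def IsSUnit (T : Finset (HeightOneSpectrum (𝓞 K))) (x : K) : Prop :=
  x ∈ SInt T ∧ ∃ y ∈ SInt T, x * y = 1

/-- The class number `h_T` of the ring of `T`-integers. -/
def classNum (T : Finset (HeightOneSpectrum (𝓞 K))) : ℕ :=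
  Nat.card (ClassGroup (SInt T))

/-- `λ_T = log₂ h_T`. -/
def lam (T : Finset (HeightOneSpectrum (𝓞 K))) : ℝ := Real.logb 2 (classNum T)

/-- `N_T`, the product of the residue field cardinalities of the finite places in `T`. -/
def normProd (T : Finset (HeightOneSpectrum (𝓞 K))) : ℕ := ∏ v ∈ T, placeNorm v

/-- `n_T`, the product of the logarithms of the residue field cardinalities of the finite
places in `T`. -/
def logProd (T : Finset (HeightOneSpectrum (𝓞 K))) : ℝ := ∏ v ∈ T, Real.log (placeNorm v)

/-- The maximum of the residue characteristics of the finite places in `T`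
(an empty maximum being `1`). -/
def maxResChar (T : Finset (HeightOneSpectrum (𝓞 K))) : ℕ := max 1 (T.sup resChar)

variable (K) in
/-- The absolute value of the discriminant of `K` over `ℚ`. -/
def absDiscr : ℕ := (NumberField.discr K).natAbs

/-- A Weierstrass curve over `K` has good reduction at a finite place `v` if some
change of variables makes all its coefficients `v`-integral and its discriminant a `v`-unit. -/
def GoodReductionAt (W : WeierstrassCurve K) (v : HeightOneSpectrum (𝓞 K)) : Prop :=
  ∃ C : WeierstrassCurve.VariableChange K,
    v.valuation K (C • W).a₁ ≤ 1 ∧ v.valuation K (C • W).a₂ ≤ 1 ∧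
    v.valuation K (C • W).a₃ ≤ 1 ∧ v.valuation K (C • W).a₄ ≤ 1 ∧
    v.valuation K (C • W).a₆ ≤ 1 ∧ v.valuation K (C • W).Δ = 1

/-- Good reduction outside a finite set `S` of finite places. -/
def GoodReductionOutside (W : WeierstrassCurve K) (S : Finset (HeightOneSpectrum (𝓞 K))) :
    Prop :=
  ∀ v : HeightOneSpectrum (𝓞 K), v ∉ S → GoodReductionAt W v

/-- Two Weierstrass curves over `K` are `K`-isomorphic if they are related by an admissible
change of variables. -/
def WIso (W W' : WeierstrassCurve K) : Prop :=
  ∃ C : WeierstrassCurve.VariableChange K, C • W = W'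

/-- The Weierstrass curve `Y² = f(X)` attached to a cubic polynomial `f`. -/
def curveOf (f : K[X]) : WeierstrassCurve K :=
  ⟨0, f.coeff 2, 0, f.coeff 1, f.coeff 0⟩

/-- The group of `T`-units of `Kˣ`. -/
def SUnitGroup (T : Finset (HeightOneSpectrum (𝓞 K))) : Subgroup Kˣ :=
  Set.unit (T : Set (HeightOneSpectrum (𝓞 K))) K

/-- `x ∈ Kˣ` is a torsion element. -/
def IsTorsionUnit (x : Kˣ) : Prop := ∃ n : ℕ, n ≠ 0 ∧ x ^ n = 1

/-- The family `ε` consists of `T`-units and generates the group of `T`-units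
modulo its torsion subgroup. -/
def GeneratesModTorsion (T : Finset (HeightOneSpectrum (𝓞 K))) {r : ℕ}
    (ε : Fin r → Kˣ) : Prop :=
  (∀ i, ε i ∈ SUnitGroup T) ∧
    ∀ x ∈ SUnitGroup T, ∃ (t : Kˣ) (k : Fin r → ℤ),
      t ∈ SUnitGroup T ∧ IsTorsionUnit t ∧ x = t * ∏ i, ε i ^ k i

/-- `ζ` is a generator of the torsion subgroup of the group of `T`-units. -/
def GeneratesTorsion (T : Finset (HeightOneSpectrum (𝓞 K))) (ζ : Kˣ) : Prop :=
  ζ ∈ SUnitGroup T ∧ IsTorsionUnit ζ ∧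
    ∀ x ∈ SUnitGroup T, IsTorsionUnit x → x ∈ Subgroup.zpowers ζ

end

end Effective


namespace UnitRedAux

open Effective IsDedekindDomain NumberField
open scoped NNReal

noncomputable section

variable {K : Type*} [Field K] [NumberField K]

lemma iSup_fin2 (f : Fin 2 → ℝ) : (⨆ i, f i) = max (f 0) (f 1) := by
  apply le_antisymm
  · exact ciSup_le fun i => by fin_cases i <;> simp [le_max_left, le_max_right]
  · exact max_le (le_ciSup (Set.Finite.bddAbove (Set.finite_range f)) 0)
      (le_ciSup (Set.Finite.bddAbove (Set.finite_range f)) 1)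

lemma vAbs_one (v : HeightOneSpectrum (𝓞 K)) : vAbs v (1 : K) = 1 := by
  simp [vAbs]

lemma vAbs_mul (v : HeightOneSpectrum (𝓞 K)) (α β : K) :
    vAbs v (α * β) = vAbs v α * vAbs v β := by
  simp [vAbs, map_mul]

lemma vAbs_nonneg (v : HeightOneSpectrum (𝓞 K)) (α : K) : 0 ≤ vAbs v α :=
  NNReal.coe_nonneg _

lemma mulHeight₁_eq (α : K) :
    mulHeight₁ α = ((∏ w : InfinitePlace K, max 1 (w α) ^ w.mult) *
      ∏ᶠ v : HeightOneSpectrum (𝓞 K), max 1 (vAbs v α)) ^ ((Module.finrank ℚ K : ℝ)⁻¹) := by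
  unfold mulHeight₁ mulHeight
  congr 1
  congr 1
  · refine Finset.prod_congr rfl fun w _ => ?_
    congr 1
    rw [show (fun i => w (![1, α] i)) = ![w 1, w α] by
      funext i; fin_cases i <;> simp, iSup_fin2]
    simp
  · refine finprod_congr fun v => ?_
    rw [show (fun i => vAbs v (![1, α] i)) = ![vAbs v 1, vAbs v α] by
      funext i; fin_cases i <;> simp, iSup_fin2]
    simp [vAbs_one]

lemma valuation_support_finite {α : K} (hα : α ≠ 0) :
    {v : HeightOneSpectrum (𝓞 K) | v.valuation K α ≠ 1}.Finite := by
  obtain ⟨a, b, hb, rfl⟩ := IsFractionRing.div_surjective (A := 𝓞 K) α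
  have ha : a ≠ 0 := by
    rintro rfl
    simp at hα
  have hb0 : b ≠ 0 := nonZeroDivisors.ne_zero hb
  have key : ∀ (r : 𝓞 K), r ≠ 0 →
      {v : HeightOneSpectrum (𝓞 K) | v.valuation K (algebraMap (𝓞 K) K r) ≠ 1}.Finite := by
    intro r hr
    refine (Ideal.finite_factors (I := Ideal.span {r}) (by simpa using hr)).subset ?_
    intro v hv
    have h1 := v.valuation_le_one (K := K) r
    have h2 : v.valuation K (algebraMap (𝓞 K) K r) < 1 := lt_of_le_of_ne h1 hv
    exact (v.valuation_lt_one_iff_dvd r).mp h2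
  refine ((key a ha).union (key b hb0)).subset ?_
  intro v hv
  by_contra hcon
  simp only [Set.mem_union, Set.mem_setOf_eq, not_or, not_not] at hcon
  apply hv
  simp only [Set.mem_setOf_eq, not_not] at hv ⊢
  rw [map_div₀, hcon.1, hcon.2, div_one]

lemma mulSupport_finite {α : K} (hα : α ≠ 0) :
    (Function.mulSupport fun v : HeightOneSpectrum (𝓞 K) => max 1 (vAbs v α)).Finite := by
  refine (valuation_support_finite hα).subset ?_
  intro v hv
  simp only [Function.mem_mulSupport] at hv
  simp only [Set.mem_setOf_eq]
  intro h
  apply hv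
  rw [show vAbs v α = 1 by simp [vAbs, h]]
  simp

lemma max1_mul_le {a b : ℝ} (ha : 0 ≤ a) (hb : 0 ≤ b) :
    max 1 (a * b) ≤ max 1 a * max 1 b := by
  apply max_le
  · exact one_le_mul_of_one_le_of_one_le (le_max_left _ _) (le_max_left _ _)
  · exact mul_le_mul (le_max_right _ _) (le_max_right _ _) hb (le_trans zero_le_one (le_max_left _ _))

lemma one_le_finprod_max {α : K} (hα : α ≠ 0) :
    1 ≤ ∏ᶠ v : HeightOneSpectrum (𝓞 K), max 1 (vAbs v α) := by
  rw [finprod_eq_prod_of_mulSupport_subset _ (s := (mulSupport_finite hα).toFinset)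
    (by simp [Set.Finite.coe_toFinset])]
  calc (1:ℝ) = ∏ v ∈ (mulSupport_finite hα).toFinset, 1 := by simp
    _ ≤ _ := Finset.prod_le_prod (by intros; exact zero_le_one)
        (fun v _ => le_max_left _ _)

lemma finprod_max_nonneg (α : K) :
    0 ≤ ∏ᶠ v : HeightOneSpectrum (𝓞 K), max 1 (vAbs v α) :=
  finprod_nonneg fun v => le_trans zero_le_one (le_max_left _ _)

lemma one_le_arch_prod (α : K) :
    1 ≤ ∏ w : InfinitePlace K, max 1 (w α) ^ w.mult := by
  calc (1:ℝ) = ∏ _w : InfinitePlace K, 1 := by simp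
    _ ≤ _ := Finset.prod_le_prod (by intros; exact zero_le_one)
        (fun w _ => one_le_pow₀ (le_max_left _ _))

lemma one_le_mulHeight₁ {α : K} (hα : α ≠ 0) : 1 ≤ mulHeight₁ α := by
  rw [mulHeight₁_eq]
  exact Real.one_le_rpow
    (one_le_mul_of_one_le_of_one_le (one_le_arch_prod α) (one_le_finprod_max hα))
    (by positivity)

lemma mulHeight₁_mul_le {α β : K} (hα : α ≠ 0) (hβ : β ≠ 0) :
    mulHeight₁ (α * β) ≤ mulHeight₁ α * mulHeight₁ β := by
  have hαβ : α * β ≠ 0 := mul_ne_zero hα hβ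
  have archnn : ∀ γ : K, (0:ℝ) ≤ ∏ w : InfinitePlace K, max 1 (w γ) ^ w.mult :=
    fun γ => le_trans zero_le_one (one_le_arch_prod γ)
  have hnn : ∀ γ : K, (0:ℝ) ≤ (∏ w : InfinitePlace K, max 1 (w γ) ^ w.mult) *
      ∏ᶠ v : HeightOneSpectrum (𝓞 K), max 1 (vAbs v γ) :=
    fun γ => mul_nonneg (archnn γ) (finprod_max_nonneg γ)
  rw [mulHeight₁_eq, mulHeight₁_eq, mulHeight₁_eq]
  rw [← Real.mul_rpow (hnn α) (hnn β)]
  apply Real.rpow_le_rpow (hnn (α * β)) ?_ (by positivity)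
  have hA : (∏ w : InfinitePlace K, max 1 (w (α * β)) ^ w.mult) ≤
      (∏ w : InfinitePlace K, max 1 (w α) ^ w.mult) *
        ∏ w : InfinitePlace K, max 1 (w β) ^ w.mult := by
    rw [← Finset.prod_mul_distrib]
    refine Finset.prod_le_prod (fun w _ => by positivity) fun w _ => ?_
    rw [← mul_pow]
    refine pow_le_pow_left₀ (by positivity) ?_ _
    rw [map_mul]
    exact max1_mul_le (apply_nonneg w α) (apply_nonneg w β)
  have hB : (∏ᶠ v : HeightOneSpectrum (𝓞 K), max 1 (vAbs v (α * β))) ≤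
      (∏ᶠ v : HeightOneSpectrum (𝓞 K), max 1 (vAbs v α)) *
        ∏ᶠ v : HeightOneSpectrum (𝓞 K), max 1 (vAbs v β) := by
    classical
    set S : Finset (HeightOneSpectrum (𝓞 K)) :=
      ((mulSupport_finite hα).union ((mulSupport_finite hβ).union
        (mulSupport_finite hαβ))).toFinset with hS
    have hsub : ∀ {γ : K}, γ ≠ 0 →
        (Function.mulSupport fun v : HeightOneSpectrum (𝓞 K) => max 1 (vAbs v γ)) ⊆
          (Function.mulSupport fun v : HeightOneSpectrum (𝓞 K) => max 1 (vAbs v γ)) := by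
      intro γ _; exact Set.Subset.refl _
    have e₁ : (∏ᶠ v : HeightOneSpectrum (𝓞 K), max 1 (vAbs v α)) =
        ∏ v ∈ S, max 1 (vAbs v α) := by
      refine finprod_eq_prod_of_mulSupport_subset _ ?_
      intro v hv
      simp only [hS, Set.Finite.coe_toFinset, Set.mem_union]
      exact Or.inl hv
    have e₂ : (∏ᶠ v : HeightOneSpectrum (𝓞 K), max 1 (vAbs v β)) =
        ∏ v ∈ S, max 1 (vAbs v β) := by
      refine finprod_eq_prod_of_mulSupport_subset _ ?_
      intro v hv
      simp only [hS, Set.Finite.coe_toFinset, Set.mem_union]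
      exact Or.inr (Or.inl hv)
    have e₃ : (∏ᶠ v : HeightOneSpectrum (𝓞 K), max 1 (vAbs v (α * β))) =
        ∏ v ∈ S, max 1 (vAbs v (α * β)) := by
      refine finprod_eq_prod_of_mulSupport_subset _ ?_
      intro v hv
      simp only [hS, Set.Finite.coe_toFinset, Set.mem_union]
      exact Or.inr (Or.inr hv)
    rw [e₁, e₂, e₃, ← Finset.prod_mul_distrib]
    refine Finset.prod_le_prod (fun v _ => by positivity) fun v _ => ?_
    rw [vAbs_mul]
    exact max1_mul_le (vAbs_nonneg v α) (vAbs_nonneg v β)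
  calc (∏ w : InfinitePlace K, max 1 (w (α * β)) ^ w.mult) *
        ∏ᶠ v : HeightOneSpectrum (𝓞 K), max 1 (vAbs v (α * β))
      ≤ ((∏ w : InfinitePlace K, max 1 (w α) ^ w.mult) *
          ∏ w : InfinitePlace K, max 1 (w β) ^ w.mult) *
        ((∏ᶠ v : HeightOneSpectrum (𝓞 K), max 1 (vAbs v α)) *
          ∏ᶠ v : HeightOneSpectrum (𝓞 K), max 1 (vAbs v β)) := by
        apply mul_le_mul hA hB (finprod_max_nonneg _)
        have h1 := one_le_arch_prod (K := K) α
        have h2 := one_le_arch_prod (K := K) β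
        nlinarith
    _ = _ := by ring

lemma logHeight₁_eq (α : K) : logHeight₁ α = Real.log (mulHeight₁ α) := rfl

lemma logHeight₁_nonneg {α : K} (hα : α ≠ 0) : 0 ≤ logHeight₁ α :=
  Real.log_nonneg (one_le_mulHeight₁ hα)

lemma logHeight₁_mul_le {α β : K} (hα : α ≠ 0) (hβ : β ≠ 0) :
    logHeight₁ (α * β) ≤ logHeight₁ α + logHeight₁ β := by
  have h1 : (0:ℝ) < mulHeight₁ α := lt_of_lt_of_le one_pos (one_le_mulHeight₁ hα)
  have h2 : (0:ℝ) < mulHeight₁ β := lt_of_lt_of_le one_pos (one_le_mulHeight₁ hβ)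
  have h3 : (0:ℝ) < mulHeight₁ (α * β) :=
    lt_of_lt_of_le one_pos (one_le_mulHeight₁ (mul_ne_zero hα hβ))
  rw [logHeight₁_eq, logHeight₁_eq, logHeight₁_eq,
    ← Real.log_mul (ne_of_gt h1) (ne_of_gt h2)]
  exact Real.log_le_log h3 (mulHeight₁_mul_le hα hβ)

lemma mulHeight₁_torsion {x : K} {n : ℕ} (hn : n ≠ 0) (hx : x ^ n = 1) :
    mulHeight₁ x = 1 := by
  have hx0 : x ≠ 0 := by
    intro h
    rw [h, zero_pow hn] at hx
    exact zero_ne_one hx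
  have key : ∀ a : ℝ, 0 ≤ a → a ^ n = 1 → a = 1 := by
    intro a ha han
    rcases lt_trichotomy a 1 with h | h | h
    · exfalso
      have := pow_lt_one₀ ha h hn
      rw [han] at this
      exact lt_irrefl _ this
    · exact h
    · exfalso
      have := one_lt_pow₀ h hn
      rw [han] at this
      exact lt_irrefl _ this
  rw [mulHeight₁_eq]
  have harch : ∀ w : InfinitePlace K, w x = 1 := by
    intro w
    refine key _ (apply_nonneg w x) ?_
    rw [← map_pow, hx, map_one]
  have hfin : ∀ v : HeightOneSpectrum (𝓞 K), vAbs v x = 1 := by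
    intro v
    refine key _ (vAbs_nonneg v x) ?_
    have : vAbs v (x ^ n) = (vAbs v x) ^ n := by
      simp [vAbs, map_pow]
    rw [← this, hx, vAbs_one]
  simp only [harch, hfin]
  simp

lemma logHeight₁_torsion {x : K} {n : ℕ} (hn : n ≠ 0) (hx : x ^ n = 1) :
    logHeight₁ x = 0 := by
  rw [logHeight₁_eq, mulHeight₁_torsion hn hx, Real.log_one]

lemma logHeight₁_pow_le {α : K} (hα : α ≠ 0) (k : ℕ) :
    logHeight₁ (α ^ k) ≤ (k : ℝ) * logHeight₁ α := by
  induction k with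
  | zero => simp [logHeight₁_torsion one_ne_zero (pow_one (1:K))]
  | succ m ih =>
    calc logHeight₁ (α ^ (m + 1)) = logHeight₁ (α ^ m * α) := by rw [pow_succ]
      _ ≤ logHeight₁ (α ^ m) + logHeight₁ α :=
          logHeight₁_mul_le (pow_ne_zero _ hα) hα
      _ ≤ (m : ℝ) * logHeight₁ α + logHeight₁ α := by linarith
      _ = ((m + 1 : ℕ) : ℝ) * logHeight₁ α := by push_cast; ring

lemma logHeight₁_prod_le {ι : Type*} (s : Finset ι) (f : ι → K) (hf : ∀ i ∈ s, f i ≠ 0) :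
    logHeight₁ (∏ i ∈ s, f i) ≤ ∑ i ∈ s, logHeight₁ (f i) := by
  classical
  induction s using Finset.cons_induction with
  | empty => simp [logHeight₁_torsion one_ne_zero (pow_one (1:K))]
  | cons a s ha ih =>
    rw [Finset.prod_cons, Finset.sum_cons]
    have h1 : f a ≠ 0 := hf a (Finset.mem_cons_self a s)
    have h2 : ∀ i ∈ s, f i ≠ 0 := fun i hi => hf i (Finset.mem_cons_of_mem hi)
    calc logHeight₁ (f a * ∏ i ∈ s, f i)
        ≤ logHeight₁ (f a) + logHeight₁ (∏ i ∈ s, f i) :=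
          logHeight₁_mul_le h1 (Finset.prod_ne_zero_iff.mpr h2)
      _ ≤ _ := by linarith [ih h2]

end
end UnitRedAux

open Effective IsDedekindDomain NumberField in
/-- Reduction of a `T`-unit modulo `M`-th powers: exponents can be reduced to lie in `[0, M)`,
with height of the reduced unit bounded by `M·Σ h(εᵢ)`. -/
theorem unit_reduction (K : Type*) [Field K] [NumberField K]
    (T : Finset (HeightOneSpectrum (𝓞 K))) (ζ : Kˣ) (r : ℕ) (ε : Fin r → Kˣ)
    (hζ : GeneratesTorsion T ζ) (hε : GeneratesModTorsion T ε) :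
    ∀ Δ ∈ SUnitGroup T, ∀ M : ℕ, 1 ≤ M →
      ∃ ω ∈ SUnitGroup T, ∃ (k₀ : ℕ) (k : Fin r → ℕ),
        k₀ < M ∧ (∀ i, k i < M) ∧
        ω ^ M * Δ = ζ ^ k₀ * ∏ i, ε i ^ k i ∧
        logHeight₁ ((ω ^ M * Δ : Kˣ) : K) ≤ (M : ℝ) * ∑ i, logHeight₁ ((ε i : K)) := by
  obtain ⟨hζSU, ⟨n, hn0, hζn⟩, hζgen⟩ := hζ
  obtain ⟨hεSU, hεgen⟩ := hε
  intro Δ hΔ M hM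
  obtain ⟨t, a, htSU, htt, hΔeq⟩ := hεgen Δ hΔ
  obtain ⟨b, hb⟩ := hζgen t htSU htt
  have hM0 : (0:ℤ) < (M:ℤ) := by exact_mod_cast hM
  set gz : ℤ := (Int.gcd (M:ℤ) (n:ℤ) : ℤ) with hgz
  have hg0 : 0 < gz := by
    have : Int.gcd (M:ℤ) (n:ℤ) ≠ 0 := by
      intro h
      rw [Int.gcd_eq_zero_iff] at h
      omega
    positivity
  have hgd : gz ∣ (M:ℤ) := Int.gcd_dvd_left _ _
  have hgM : gz ≤ (M:ℤ) := Int.le_of_dvd hM0 hgd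
  set u : ℤ := Int.gcdA (M:ℤ) (n:ℤ) with hu
  set w : ℤ := Int.gcdB (M:ℤ) (n:ℤ) with hw
  have hbez : gz = (M:ℤ) * u + (n:ℤ) * w := Int.gcd_eq_gcd_ab (M:ℤ) (n:ℤ)
  set k₀ : ℕ := (b % gz).toNat with hk₀
  have hk₀b : (k₀:ℤ) = b % gz := Int.toNat_of_nonneg (Int.emod_nonneg b (ne_of_gt hg0))
  have hk₀M : k₀ < M := by
    have h1 : b % gz < gz := Int.emod_lt_of_pos b hg0
    have : (k₀:ℤ) < (M:ℤ) := by rw [hk₀b]; exact lt_of_lt_of_le h1 hgM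
    exact_mod_cast this
  set q : ℤ := b / gz with hq
  have hbq : b % gz = b - gz * q := by rw [Int.emod_def, hq]
  set d : ℤ := -(u * q) with hd
  have hzeta : (M:ℤ) * d + b = (k₀:ℤ) + (n:ℤ) * (w * q) := by
    rw [hd]
    linear_combination -hk₀b - hbq + q * hbez
  have hzp : ζ ^ ((M:ℤ) * d + b) = ζ ^ (k₀:ℤ) := by
    rw [hzeta, zpow_add, zpow_mul]
    simp only [zpow_natCast]
    rw [hζn, one_zpow, mul_one]
  set k : Fin r → ℕ := fun i => (a i % (M:ℤ)).toNat with hk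
  have hki : ∀ i, (k i : ℤ) = a i % (M:ℤ) := fun i =>
    Int.toNat_of_nonneg (Int.emod_nonneg _ (ne_of_gt hM0))
  have hkM : ∀ i, k i < M := by
    intro i
    have h1 : a i % (M:ℤ) < (M:ℤ) := Int.emod_lt_of_pos _ hM0
    have : (k i : ℤ) < (M:ℤ) := by rw [hki i]; exact h1
    exact_mod_cast this
  set c : Fin r → ℤ := fun i => -(a i / (M:ℤ)) with hc
  have heps : ∀ i, (M:ℤ) * c i + a i = (k i : ℤ) := by
    intro i
    rw [hki i, hc, Int.emod_def]
    ring
  set ω : Kˣ := ζ ^ d * ∏ i, ε i ^ c i with hω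
  have hωSU : ω ∈ SUnitGroup T :=
    Subgroup.mul_mem _ (Subgroup.zpow_mem _ hζSU d)
      (Subgroup.prod_mem _ fun i _ => Subgroup.zpow_mem _ (hεSU i) _)
  have expand : ∀ (x : Kˣ) (e : ℤ), (x ^ e) ^ M = x ^ ((M:ℤ) * e) := by
    intro x e
    rw [← zpow_natCast (x ^ e) M, ← zpow_mul, mul_comm]
  have hmain : ω ^ M * Δ = ζ ^ k₀ * ∏ i, ε i ^ k i := by
    rw [hΔeq, ← hb, hω, mul_pow, expand, ← Finset.prod_pow]
    simp only [expand]
    rw [mul_mul_mul_comm, ← zpow_add, ← Finset.prod_mul_distrib, hzp, zpow_natCast]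
    congr 1
    refine Finset.prod_congr rfl fun i _ => ?_
    rw [← zpow_add, heps i, zpow_natCast]
  refine ⟨ω, hωSU, k₀, k, hk₀M, hkM, hmain, ?_⟩
  rw [hmain]
  have hcast : ((ζ ^ k₀ * ∏ i, ε i ^ k i : Kˣ) : K) =
      (ζ : K) ^ k₀ * ∏ i, (ε i : K) ^ k i := by
    push_cast
    rfl
  rw [hcast]
  have hζKn : ((ζ : K)) ^ n = 1 := by
    have := congrArg (Units.val) hζn
    push_cast at this
    exact this
  have hζtor : ((ζ : K) ^ k₀) ^ n = 1 := by
    rw [← pow_mul, mul_comm, pow_mul, hζKn, one_pow]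
  have hεne : ∀ i, ((ε i : K)) ≠ 0 := fun i => Units.ne_zero _
  have hprodne : (∏ i, (ε i : K) ^ k i) ≠ 0 :=
    Finset.prod_ne_zero_iff.mpr fun i _ => pow_ne_zero _ (hεne i)
  calc logHeight₁ ((ζ : K) ^ k₀ * ∏ i, (ε i : K) ^ k i)
      ≤ logHeight₁ ((ζ : K) ^ k₀) + logHeight₁ (∏ i, (ε i : K) ^ k i) :=
        UnitRedAux.logHeight₁_mul_le (pow_ne_zero _ (Units.ne_zero ζ)) hprodne
    _ = logHeight₁ (∏ i, (ε i : K) ^ k i) := by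
        rw [UnitRedAux.logHeight₁_torsion hn0 hζtor, zero_add]
    _ ≤ ∑ i, logHeight₁ ((ε i : K) ^ k i) :=
        UnitRedAux.logHeight₁_prod_le _ _ fun i _ => pow_ne_zero _ (hεne i)
    _ ≤ ∑ i, (M : ℝ) * logHeight₁ ((ε i : K)) := by
        refine Finset.sum_le_sum fun i _ => ?_
        calc logHeight₁ ((ε i : K) ^ k i) ≤ (k i : ℝ) * logHeight₁ ((ε i : K)) :=
              UnitRedAux.logHeight₁_pow_le (hεne i) _
          _ ≤ (M : ℝ) * logHeight₁ ((ε i : K)) := by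
              apply mul_le_mul_of_nonneg_right _ (UnitRedAux.logHeight₁_nonneg (hεne i))
              exact_mod_cast (hkM i).le
    _ = (M : ℝ) * ∑ i, logHeight₁ ((ε i : K)) := by rw [Finset.mul_sum]
end

section
/- Let K be a number field and G a binary form of degree n ≥ 2 over K with nonzero discriminant. Then H(Δ(G)) ≤ 2^{3n(n−1)} · H(G)^{2n−2}. -/
open scoped NNReal
open IsDedekindDomain NumberField Polynomial

namespace DiscAux

lemma binom2 (a t : ℕ) : a^(t+1) + (t+1)*a^t ≤ (a+1)^(t+1) := by
  induction t with
  | zero => simp [pow_succ]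
  | succ t ih =>
    calc a^(t+2) + (t+2)*a^(t+1)
        ≤ a^(t+2) + (t+2)*a^(t+1) + (t+1)*a^t := Nat.le_add_right _ _
      _ = (a+1) * (a^(t+1) + (t+1)*a^t) := by ring
      _ ≤ (a+1) * (a+1)^(t+1) := Nat.mul_le_mul_left _ ih
      _ = (a+1)^(t+2) := by ring

lemma two_mul_pow_le {a k : ℕ} (ha : 1 ≤ a) (hak : a ≤ k) : 2 * a^k ≤ (a+1)^k := by
  obtain ⟨t, rfl⟩ : ∃ t, k = t + 1 := ⟨k - 1, by omega⟩
  have h1 : a * a^t ≤ (t+1) * a^t := Nat.mul_le_mul_right _ (by omega)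
  calc 2 * a^(t+1) = a^(t+1) + a * a^t := by ring
    _ ≤ a^(t+1) + (t+1)*a^t := by omega
    _ ≤ (a+1)^(t+1) := binom2 a t

lemma two_pow_fact (k : ℕ) : 2^k * k.factorial ≤ (k+1)^k := by
  induction k with
  | zero => simp
  | succ k ih =>
    calc 2^(k+1) * (k+1).factorial = (2 * (k+1)) * (2^k * k.factorial) := by
          rw [Nat.factorial_succ]; ring
      _ ≤ (2 * (k+1)) * (k+1)^k := Nat.mul_le_mul_left _ ih
      _ = 2 * (k+1)^(k+1) := by ring
      _ ≤ (k+2)^(k+1) := two_mul_pow_le (by omega) (by omega)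

lemma fact_le_pow {m : ℕ} (hm : 1 ≤ m) : (2*m-1).factorial ≤ m^(2*m-1) := by
  have h := two_pow_fact (2*m-1)
  have h2 : (2*m-1)+1 = 2*m := by omega
  rw [h2] at h
  have h3 : (2*m)^(2*m-1) = 2^(2*m-1) * m^(2*m-1) := by rw [← Nat.mul_pow]
  rw [h3] at h
  exact Nat.le_of_mul_le_mul_left h (Nat.pow_pos (by norm_num))

lemma sq_le_two_pow {m : ℕ} (hm : 4 ≤ m) : m^2 ≤ 2^(m+1) := by
  induction m with
  | zero => omega
  | succ m ih =>
    rcases Nat.lt_or_ge m 4 with h | h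
    · interval_cases m <;> norm_num
    · have := ih (by omega)
      have h2 : (m+1)^2 ≤ 2 * m^2 := by nlinarith
      calc (m+1)^2 ≤ 2 * m^2 := h2
        _ ≤ 2 * 2^(m+1) := by omega
        _ = 2^(m+2) := by ring

lemma key_nat {m : ℕ} (hm : 1 ≤ m) :
    (2*m-1).factorial * m^(2*m-1) ≤ 2^(3*m*(m-1)) := by
  have h1 : (2*m-1).factorial * m^(2*m-1) ≤ m^(2*m-1) * m^(2*m-1) :=
    Nat.mul_le_mul_right _ (fact_le_pow hm)
  have h2 : m^(2*m-1) * m^(2*m-1) = m^(2*(2*m-1)) := by rw [← pow_add]; congr 1; omega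
  rw [h2] at h1
  refine h1.trans ?_
  rcases Nat.lt_or_ge m 4 with h | h
  · interval_cases m <;> norm_num
  · have h3 : m^(2*(2*m-1)) = (m^2)^(2*m-1) := pow_mul m 2 (2*m-1)
    rw [h3]
    have h4 : (m+1)*(2*m-1) ≤ 3*m*(m-1) := by
      obtain ⟨t, rfl⟩ : ∃ t, m = t + 4 := ⟨m - 4, by omega⟩
      have e1 : 2*(t+4)-1 = 2*t+7 := by omega
      have e2 : (t+4)-1 = t+3 := by omega
      rw [e1, e2]; nlinarith
    calc (m^2)^(2*m-1) ≤ (2^(m+1))^(2*m-1) := Nat.pow_le_pow_left (sq_le_two_pow h) _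
      _ = 2^((m+1)*(2*m-1)) := by rw [← pow_mul]
      _ ≤ 2^(3*m*(m-1)) := Nat.pow_le_pow_right (by norm_num) h4

end DiscAux
namespace DiscAux

open Effective IsDedekindDomain IsDedekindDomain.HeightOneSpectrum NumberField Polynomial
open scoped NNReal

variable {K : Type*} [Field K] [NumberField K] (v : HeightOneSpectrum (𝓞 K))

lemma one_lt_placeNorm : (1:ℝ≥0) < (placeNorm v : ℝ≥0) := by
  have h0 : placeNorm v ≠ 0 := by
    have := placeNorm_ne_zero (K := K) v
    exact_mod_cast this
  have h1 : placeNorm v ≠ 1 := by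
    intro h1
    exact v.isPrime.ne_top (Ideal.absNorm_eq_one_iff.mp h1)
  have : (1:ℕ) < placeNorm v := by omega
  exact_mod_cast this

lemma vAbs_nonneg (x : K) : 0 ≤ vAbs v x := by unfold vAbs; exact NNReal.coe_nonneg _

lemma vAbs_le_of_le {x y : K} (h : v.valuation K x ≤ v.valuation K y) : vAbs v x ≤ vAbs v y := by
  unfold vAbs
  exact_mod_cast (WithZeroMulInt.toNNReal_strictMono (one_lt_placeNorm v)).monotone h

lemma vAbs_one : vAbs v (1 : K) = 1 := by
  unfold vAbs; rw [map_one, map_one, NNReal.coe_one]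

lemma vAbs_zero : vAbs v (0 : K) = 0 := by
  unfold vAbs; rw [map_zero, map_zero, NNReal.coe_zero]

lemma vAbs_mul (x y : K) : vAbs v (x * y) = vAbs v x * vAbs v y := by
  unfold vAbs; rw [map_mul, map_mul, NNReal.coe_mul]

lemma vAbs_neg (x : K) : vAbs v (-x) = vAbs v x := by
  unfold vAbs; rw [Valuation.map_neg]

lemma vAbs_prod {ι : Type*} (s : Finset ι) (f : ι → K) :
    vAbs v (∏ i ∈ s, f i) = ∏ i ∈ s, vAbs v (f i) := by
  unfold vAbs; rw [map_prod, map_prod, NNReal.coe_prod]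

lemma vAbs_add_le (x y : K) : vAbs v (x + y) ≤ max (vAbs v x) (vAbs v y) := by
  have h := (v.valuation K).map_add x y
  rcases le_total (v.valuation K x) (v.valuation K y) with hc | hc
  · exact le_max_of_le_right (vAbs_le_of_le v (h.trans (max_le hc le_rfl)))
  · exact le_max_of_le_left (vAbs_le_of_le v (h.trans (max_le le_rfl hc)))

lemma vAbs_sum_le {ι : Type*} (s : Finset ι) (f : ι → K) {M : ℝ} (hM : 0 ≤ M)
    (h : ∀ i ∈ s, vAbs v (f i) ≤ M) : vAbs v (∑ i ∈ s, f i) ≤ M := by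
  induction s using Finset.cons_induction with
  | empty => simpa [vAbs_zero] using hM
  | cons a s ha ih =>
    rw [Finset.sum_cons]
    exact (vAbs_add_le v _ _).trans (max_le (h a (by simp))
      (ih fun i hi => h i (by simp [hi])))

lemma vAbs_natCast_le_one (k : ℕ) : vAbs v ((k : K)) ≤ 1 := by
  have h : v.valuation K ((k:K)) ≤ 1 := by
    have h2 := valuation_le_one (K := K) v ((k : 𝓞 K))
    convert h2 using 2; simp
  calc vAbs v ((k:K)) ≤ vAbs v 1 := vAbs_le_of_le v (by rw [map_one]; exact h)
    _ = 1 := vAbs_one v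

lemma vAbs_le_one_iff (x : K) : vAbs v x ≤ 1 ↔ v.valuation K x ≤ 1 := by
  unfold vAbs
  rw [show (1:ℝ) = ((1:ℝ≥0):ℝ) from rfl, NNReal.coe_le_coe,
    show (1:ℝ≥0) = WithZeroMulInt.toNNReal (placeNorm_ne_zero v) 1 from (map_one _).symm]
  exact ⟨fun h => ((WithZeroMulInt.toNNReal_strictMono (one_lt_placeNorm v)).le_iff_le).mp h,
    fun h => (WithZeroMulInt.toNNReal_strictMono (one_lt_placeNorm v)).monotone h⟩

lemma finite_val_gt_one (x : K) :
    {v : HeightOneSpectrum (𝓞 K) | 1 < v.valuation K x}.Finite := by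
  obtain ⟨⟨nu, ⟨d, hd⟩⟩, hk⟩ := IsLocalization.surj (nonZeroDivisors (𝓞 K)) x
  have hd' : d ≠ 0 := nonZeroDivisors.ne_zero hd
  suffices h : {v : HeightOneSpectrum (𝓞 K) |
      v.valuation K (algebraMap (𝓞 K) K d : K) < 1}.Finite by
    apply h.subset
    intro v hv
    apply_fun v.valuation K at hk
    simp only [Valuation.map_mul, valuation_of_algebraMap] at hk
    rw [Set.mem_setOf_eq, valuation_of_algebraMap]
    have hle := intValuation_le_one v nu
    contrapose! hle
    change 1 < v.intValuation nu
    rw [← hk, mul_comm]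
    exact Right.one_lt_mul_of_le_of_lt hle hv
  simp_rw [valuation_of_algebraMap]
  change {v : HeightOneSpectrum (𝓞 K) | v.intValuation d < 1}.Finite
  simp_rw [intValuation_lt_one_iff_dvd]
  apply Ideal.finite_factors
  simpa only [Submodule.zero_eq_bot, ne_eq, Ideal.span_singleton_eq_bot]

end DiscAux
namespace DiscAux

open Effective IsDedekindDomain IsDedekindDomain.HeightOneSpectrum NumberField Polynomial
open scoped NNReal

variable {K : Type*} [Field K] [NumberField K]

lemma abs_natCast_le (w : InfinitePlace K) (k : ℕ) : w ((k : K)) ≤ (k : ℝ) := by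
  induction k with
  | zero => simp
  | succ k ih =>
    push_cast
    calc w ((k:K) + 1) ≤ w ((k:K)) + w 1 := w.1.add_le _ _
      _ ≤ (k:ℝ) + 1 := by rw [map_one]; linarith

lemma abs_det_le {ι : Type*} [DecidableEq ι] [Fintype ι] (w : InfinitePlace K) (i₀ : ι)
    (N : Matrix ι ι K) (M B : ℝ) (hM : 0 ≤ M) (hB : 0 ≤ B)
    (h0 : ∀ i, w (N i i₀) ≤ M) (h : ∀ i j, j ≠ i₀ → w (N i j) ≤ M * B) :
    w N.det ≤ (Fintype.card ι).factorial * (M * (M*B)^(Fintype.card ι - 1)) := by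
  rw [Matrix.det_apply]
  have key : ∀ σ : Equiv.Perm ι, w (Equiv.Perm.sign σ • ∏ i, N (σ i) i)
      ≤ M * (M*B)^(Fintype.card ι - 1) := by
    intro σ
    have hsgn : w (Equiv.Perm.sign σ • ∏ i, N (σ i) i) = w (∏ i, N (σ i) i) := by
      rcases Int.units_eq_one_or (Equiv.Perm.sign σ) with hs | hs <;> rw [hs]
      · rw [one_smul]
      · rw [Units.smul_def, Units.val_neg, Units.val_one, neg_one_zsmul]
        exact w.1.map_neg _
    rw [hsgn, map_prod, ← Finset.mul_prod_erase Finset.univ _ (Finset.mem_univ i₀)]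
    have h2 : ∏ i ∈ Finset.univ.erase i₀, w (N (σ i) i) ≤ (M*B)^(Fintype.card ι - 1) := by
      calc ∏ i ∈ Finset.univ.erase i₀, w (N (σ i) i)
          ≤ ∏ _i ∈ Finset.univ.erase i₀, (M*B) :=
            Finset.prod_le_prod (fun i _ => apply_nonneg w _)
              (fun i hi => h _ i (Finset.ne_of_mem_erase hi))
        _ = (M*B)^(Fintype.card ι - 1) := by
            rw [Finset.prod_const, Finset.card_erase_of_mem (Finset.mem_univ _),
              Finset.card_univ]
    exact mul_le_mul (h0 _) h2 (Finset.prod_nonneg fun i _ => apply_nonneg w _) hM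
  calc w (∑ σ : Equiv.Perm ι, Equiv.Perm.sign σ • ∏ i, N (σ i) i)
      ≤ ∑ σ : Equiv.Perm ι, w (Equiv.Perm.sign σ • ∏ i, N (σ i) i) := w.1.sum_le _ _
    _ ≤ ∑ _σ : Equiv.Perm ι, (M * (M*B)^(Fintype.card ι - 1)) :=
        Finset.sum_le_sum fun σ _ => key σ
    _ = (Fintype.card ι).factorial * (M * (M*B)^(Fintype.card ι - 1)) := by
        rw [Finset.sum_const, Finset.card_univ, Fintype.card_perm, nsmul_eq_mul]

lemma vAbs_det_le {ι : Type*} [DecidableEq ι] [Fintype ι] (v : HeightOneSpectrum (𝓞 K))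
    (i₀ : ι) (N : Matrix ι ι K) (B : ℝ) (hB : 1 ≤ B) (h0 : ∀ i, vAbs v (N i i₀) ≤ 1)
    (h : ∀ i j, j ≠ i₀ → vAbs v (N i j) ≤ B) :
    vAbs v N.det ≤ B ^ (Fintype.card ι - 1) := by
  rw [Matrix.det_apply]
  have hB0 : (0:ℝ) ≤ B := le_trans zero_le_one hB
  apply vAbs_sum_le v _ _ (pow_nonneg hB0 _)
  intro σ _
  have hsgn : vAbs v (Equiv.Perm.sign σ • ∏ i, N (σ i) i) = vAbs v (∏ i, N (σ i) i) := by
    rcases Int.units_eq_one_or (Equiv.Perm.sign σ) with hs | hs <;> rw [hs]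
    · rw [one_smul]
    · rw [Units.smul_def, Units.val_neg, Units.val_one, neg_one_zsmul]
      exact vAbs_neg v _
  rw [hsgn, vAbs_prod, ← Finset.mul_prod_erase Finset.univ _ (Finset.mem_univ i₀)]
  have h2 : ∏ i ∈ Finset.univ.erase i₀, vAbs v (N (σ i) i) ≤ B ^ (Fintype.card ι - 1) := by
    calc ∏ i ∈ Finset.univ.erase i₀, vAbs v (N (σ i) i)
        ≤ ∏ _i ∈ Finset.univ.erase i₀, B :=
          Finset.prod_le_prod (fun i _ => vAbs_nonneg v _)
            (fun i hi => h _ i (Finset.ne_of_mem_erase hi))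
      _ = B ^ (Fintype.card ι - 1) := by
          rw [Finset.prod_const, Finset.card_erase_of_mem (Finset.mem_univ _),
            Finset.card_univ]
  calc vAbs v (N (σ i₀) i₀) * ∏ i ∈ Finset.univ.erase i₀, vAbs v (N (σ i) i)
      ≤ 1 * (B ^ (Fintype.card ι - 1)) :=
        mul_le_mul (h0 _) h2 (Finset.prod_nonneg fun i _ => vAbs_nonneg v _) zero_le_one
    _ = B ^ (Fintype.card ι - 1) := one_mul _

lemma sylvester_entry_cases (m l : ℕ) (p q : K[X]) (i j : Fin (l+m)) :
    sylvester m l p q i j = 0 ∨ (∃ k, sylvester m l p q i j = p.coeff k) ∨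
      ∃ k, sylvester m l p q i j = q.coeff k := by
  unfold Effective.sylvester
  rw [Matrix.of_apply]
  split_ifs
  · exact Or.inr (Or.inl ⟨_, rfl⟩)
  · exact Or.inl rfl
  · exact Or.inr (Or.inr ⟨_, rfl⟩)
  · exact Or.inl rfl

lemma polyDisc_struct (g : K[X]) (h1 : 1 ≤ g.natDegree) :
    ∃ (N : Matrix (Fin ((g.natDegree - 1) + g.natDegree))
        (Fin ((g.natDegree - 1) + g.natDegree)) K)
      (i₀ : Fin ((g.natDegree - 1) + g.natDegree)),
      (∀ i, N i i₀ = 1 ∨ N i i₀ = ((g.natDegree : ℕ) : K) ∨ N i i₀ = 0) ∧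
      (∀ i j, j ≠ i₀ → N i j = 0 ∨ (∃ k, N i j = g.coeff k) ∨
        ∃ k, N i j = (derivative g).coeff k) ∧
      polyDisc g = (-1:K)^(g.natDegree*(g.natDegree-1)/2) * N.det := by
  have hg0 : g ≠ 0 := fun h => by simp [h] at h1
  set d := g.natDegree with hd
  have hlc : g.leadingCoeff ≠ 0 := Polynomial.leadingCoeff_ne_zero.mpr hg0
  set l := d - 1 with hl
  have hld : l + 1 = d := by omega
  set i₀ : Fin (l + d) := ⟨0, by omega⟩ with hi₀
  set u : Fin (l + d) → K := fun i => if (i:ℕ) = 0 then 1 else if (i:ℕ) = l then (d:K) else 0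
    with hu
  set S := sylvester d l g (derivative g) with hS
  set N := S.updateCol i₀ u with hN
  have hcol0 : ∀ i, S i i₀ = g.leadingCoeff * u i := by
    intro i
    have hiv : (i₀ : ℕ) = 0 := rfl
    rw [hS]
    unfold Effective.sylvester
    rw [Matrix.of_apply, hiv]
    by_cases h : (i:ℕ) < l
    · rw [if_pos h]
      by_cases hz : (i:ℕ) = 0
      · have hui : u i = 1 := by simp only [hu]; rw [if_pos hz]
        rw [if_pos (by omega : (i:ℕ) ≤ 0 ∧ 0 ≤ (i:ℕ) + d), hui, mul_one,
          show d + (i:ℕ) - 0 = d from by omega]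
        exact Polynomial.coeff_natDegree
      · have hui : u i = 0 := by simp only [hu]; rw [if_neg hz, if_neg (by omega)]
        rw [if_neg (by omega : ¬((i:ℕ) ≤ 0 ∧ 0 ≤ (i:ℕ) + d)), hui, mul_zero]
    · rw [if_neg h]
      by_cases hz : (i:ℕ) = l
      · rw [if_pos (by omega : (i:ℕ) - l ≤ 0 ∧ 0 ≤ ((i:ℕ) - l) + l),
          show l + ((i:ℕ) - l) - 0 = l from by omega, Polynomial.coeff_derivative]
        have hc1 : g.coeff (l+1) = g.leadingCoeff := by
          rw [hld]; exact Polynomial.coeff_natDegree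
        by_cases hl0 : l = 0
        · have hui : u i = 1 := by simp only [hu]; rw [if_pos (by omega)]
          rw [hui, mul_one, hc1, hl0]
          push_cast
          ring
        · have hui : u i = (d:K) := by simp only [hu]; rw [if_neg (by omega), if_pos hz]
          rw [hui, hc1, show ((l:K)+1) = (d:K) from by rw [← hld]; push_cast; ring]
      · have hui : u i = 0 := by simp only [hu]; rw [if_neg (by omega), if_neg hz]
        rw [if_neg (by omega : ¬((i:ℕ) - l ≤ 0 ∧ 0 ≤ ((i:ℕ) - l) + l)), hui, mul_zero]
  have hSN : S = N.updateCol i₀ (g.leadingCoeff • u) := by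
    ext i j
    by_cases hj : j = i₀
    · subst hj
      rw [Matrix.updateCol_self, Pi.smul_apply, smul_eq_mul, hcol0]
    · rw [Matrix.updateCol_apply, if_neg hj, hN, Matrix.updateCol_apply, if_neg hj]
  have hNu : N.updateCol i₀ u = N := by
    ext i j
    by_cases hj : j = i₀
    · subst hj
      rw [Matrix.updateCol_self, hN, Matrix.updateCol_self]
    · rw [Matrix.updateCol_apply, if_neg hj]
  have hdet : S.det = g.leadingCoeff * N.det := by
    conv_lhs => rw [hSN]
    rw [Matrix.det_updateCol_smul, hNu]
  refine ⟨N, i₀, ?_, ?_, ?_⟩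
  · intro i
    rw [hN, Matrix.updateCol_self]
    by_cases h1' : (i:ℕ) = 0
    · left; simp only [hu]; rw [if_pos h1']
    · by_cases h2 : (i:ℕ) = l
      · right; left; simp only [hu]; rw [if_neg h1', if_pos h2]
      · right; right; simp only [hu]; rw [if_neg h1', if_neg h2]
  · intro i j hj
    rw [hN, Matrix.updateCol_apply, if_neg hj, hS]
    exact sylvester_entry_cases d l g (derivative g) i j
  · show polyDisc g = _
    unfold polyDisc
    rw [← hd, ← hl, ← hS, hdet]
    field_simp

end DiscAux
namespace DiscAux

open Effective IsDedekindDomain IsDedekindDomain.HeightOneSpectrum NumberField Polynomial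
open scoped NNReal

variable {K : Type*} [Field K] [NumberField K]

lemma abs_neg_one_pow (w : InfinitePlace K) (e : ℕ) : w ((-1:K)^e) = 1 := by
  rcases neg_one_pow_eq_or K e with h | h <;> rw [h]
  · exact map_one w
  · exact (w.1.map_neg 1).trans (map_one w)

lemma vAbs_neg_one_pow (v : HeightOneSpectrum (𝓞 K)) (e : ℕ) : vAbs v ((-1:K)^e) = 1 := by
  rcases neg_one_pow_eq_or K e with h | h <;> rw [h]
  · exact vAbs_one v
  · exact (vAbs_neg v 1).trans (vAbs_one v)

lemma polyDisc_abs_le (w : InfinitePlace K) (g : K[X]) {B : ℝ} (hB : 1 ≤ B)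
    (h1 : 1 ≤ g.natDegree) (hc : ∀ k, w (g.coeff k) ≤ B) :
    w (polyDisc g) ≤
      (((2*g.natDegree-1).factorial * g.natDegree^(2*g.natDegree-1) : ℕ) : ℝ) *
        B^(2*g.natDegree-2) := by
  set d := g.natDegree with hd
  obtain ⟨N, i₀, hcol, hoff, hdisc⟩ := polyDisc_struct g h1
  have hB0 : (0:ℝ) ≤ B := le_trans zero_le_one hB
  have hM : (0:ℝ) ≤ (d:ℝ) := Nat.cast_nonneg _
  have hd1 : (1:ℝ) ≤ (d:ℝ) := by exact_mod_cast h1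
  have hcol' : ∀ i, w (N i i₀) ≤ (d:ℝ) := by
    intro i
    rcases hcol i with h|h|h <;> rw [h]
    · rw [map_one]; exact hd1
    · exact abs_natCast_le w d
    · rw [map_zero]; exact hM
  have hder : ∀ k, w ((derivative g).coeff k) ≤ (d:ℝ) * B := by
    intro k
    rw [coeff_derivative]
    rcases Nat.lt_or_ge k d with hk | hk
    · rw [map_mul]
      have h2 : w ((k:K) + 1) ≤ ((k+1 : ℕ) : ℝ) := by
        have := abs_natCast_le w (k+1)
        rwa [show (((k+1:ℕ)) : K) = (k:K) + 1 from by push_cast; ring] at this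
      calc w (g.coeff (k+1)) * w ((k:K)+1) ≤ B * ((k+1:ℕ) : ℝ) :=
            mul_le_mul (hc _) h2 (apply_nonneg w _) hB0
        _ ≤ (d:ℝ) * B := by
            have : ((k+1:ℕ) : ℝ) ≤ (d:ℝ) := by exact_mod_cast hk
            nlinarith
    · have hz : g.coeff (k+1) = 0 := coeff_eq_zero_of_natDegree_lt (by omega)
      rw [hz, zero_mul, map_zero]
      positivity
  have hoff' : ∀ i j, j ≠ i₀ → w (N i j) ≤ (d:ℝ) * B := by
    intro i j hj
    rcases hoff i j hj with h|⟨k,h⟩|⟨k,h⟩ <;> rw [h]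
    · rw [map_zero]; positivity
    · calc w (g.coeff k) ≤ B := hc k
        _ = 1 * B := (one_mul B).symm
        _ ≤ (d:ℝ) * B := by nlinarith
    · exact hder k
  have hdet := abs_det_le w i₀ N (d:ℝ) B hM hB0 hcol' hoff'
  rw [Fintype.card_fin] at hdet
  rw [hdisc, map_mul, abs_neg_one_pow, one_mul]
  refine hdet.trans (le_of_eq ?_)
  rw [show (d - 1) + d = 2*d-1 from by omega, show 2*d-1-1 = 2*d-2 from by omega]
  rw [mul_pow, ← mul_assoc ((d:ℝ)) _ _, ← pow_succ' (d:ℝ), show (2*d-2)+1 = 2*d-1 from by omega]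
  push_cast
  ring

lemma polyDisc_vAbs_le (v : HeightOneSpectrum (𝓞 K)) (g : K[X]) {B : ℝ} (hB : 1 ≤ B)
    (h1 : 1 ≤ g.natDegree) (hc : ∀ k, vAbs v (g.coeff k) ≤ B) :
    vAbs v (polyDisc g) ≤ B^(2*g.natDegree-2) := by
  set d := g.natDegree with hd
  obtain ⟨N, i₀, hcol, hoff, hdisc⟩ := polyDisc_struct g h1
  have hB0 : (0:ℝ) ≤ B := le_trans zero_le_one hB
  have hcol' : ∀ i, vAbs v (N i i₀) ≤ 1 := by
    intro i
    rcases hcol i with h|h|h <;> rw [h]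
    · rw [vAbs_one]
    · exact vAbs_natCast_le_one v d
    · rw [vAbs_zero]; exact zero_le_one
  have hder : ∀ k, vAbs v ((derivative g).coeff k) ≤ B := by
    intro k
    rw [coeff_derivative, vAbs_mul]
    have h2 : vAbs v ((k:K) + 1) ≤ 1 := by
      have := vAbs_natCast_le_one v (k+1)
      rwa [show (((k+1:ℕ)) : K) = (k:K) + 1 from by push_cast; ring] at this
    calc vAbs v (g.coeff (k+1)) * vAbs v ((k:K)+1) ≤ B * 1 :=
          mul_le_mul (hc _) h2 (vAbs_nonneg v _) hB0
      _ = B := mul_one B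
  have hoff' : ∀ i j, j ≠ i₀ → vAbs v (N i j) ≤ B := by
    intro i j hj
    rcases hoff i j hj with h|⟨k,h⟩|⟨k,h⟩ <;> rw [h]
    · rw [vAbs_zero]; exact hB0
    · exact hc k
    · exact hder k
  have hdet := vAbs_det_le v i₀ N B hB hcol' hoff'
  rw [Fintype.card_fin] at hdet
  rw [hdisc, vAbs_mul, vAbs_neg_one_pow, one_mul]
  rwa [show (d - 1) + d - 1 = 2*d-2 from by omega] at hdet

end DiscAux
namespace DiscAux

open Effective IsDedekindDomain IsDedekindDomain.HeightOneSpectrum NumberField Polynomial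
open scoped NNReal

variable {K : Type*} [Field K] [NumberField K]

lemma iSup_fin2 (f : Fin 2 → ℝ) : (⨆ i, f i) = max (f 0) (f 1) := by
  apply le_antisymm
  · refine ciSup_le fun i => ?_
    fin_cases i
    · exact le_max_left _ _
    · exact le_max_right _ _
  · exact max_le (le_ciSup (Set.Finite.bddAbove (Set.finite_range f)) 0)
      (le_ciSup (Set.Finite.bddAbove (Set.finite_range f)) 1)

lemma one_le_finset_prod {ι : Type*} (s : Finset ι) (f : ι → ℝ) (h : ∀ i ∈ s, 1 ≤ f i) :
    1 ≤ ∏ i ∈ s, f i := by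
  calc (1:ℝ) = ∏ _i ∈ s, 1 := Finset.prod_const_one.symm
    _ ≤ ∏ i ∈ s, f i := Finset.prod_le_prod (fun i _ => zero_le_one) h

lemma height_assembly {n : ℕ} (β : Fin (n+1) → K) (e : ℕ) (C : ℝ) (hC : 1 ≤ C) (Δ : K)
    (hArch : ∀ w : InfinitePlace K, w Δ ≤ C * (⨆ i, w ((Fin.cons 1 β : Fin (n+2) → K) i)) ^ e)
    (hNon : ∀ v : HeightOneSpectrum (𝓞 K), vAbs v Δ ≤ (⨆ i, vAbs v ((Fin.cons 1 β : Fin (n+2) → K) i)) ^ e) :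
    mulHeight₁ Δ ≤ C * mulHeight (Fin.cons 1 β) ^ e := by
  have hC0 : (0:ℝ) ≤ C := le_trans zero_le_one hC
  set x : Fin (n+2) → K := Fin.cons 1 β with hx
  have hx0 : x 0 = 1 := rfl
  set D := Module.finrank ℚ K with hD
  have hDpos : 0 < D := Module.finrank_pos
  -- sup bounds
  have hBw1 : ∀ w : InfinitePlace K, 1 ≤ ⨆ i, w (x i) := by
    intro w
    calc (1:ℝ) = w (x 0) := by rw [hx0, map_one]
      _ ≤ ⨆ i, w (x i) :=
        le_ciSup (f := fun i => w (x i)) (Set.Finite.bddAbove (Set.finite_range _)) 0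
  have hBv1 : ∀ v : HeightOneSpectrum (𝓞 K), 1 ≤ ⨆ i, vAbs v (x i) := by
    intro v
    calc (1:ℝ) = vAbs v (x 0) := by rw [hx0, vAbs_one]
      _ ≤ ⨆ i, vAbs v (x i) :=
        le_ciSup (f := fun i => vAbs v (x i)) (Set.Finite.bddAbove (Set.finite_range _)) 0
  -- finiteness of the support
  have hsupp : Function.mulSupport (fun v => ⨆ i, vAbs v (x i)) ⊆
      ⋃ i, {v : HeightOneSpectrum (𝓞 K) | 1 < v.valuation K (x i)} := by
    intro v hv
    by_contra hmem
    apply hv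
    have hle : ∀ i, vAbs v (x i) ≤ 1 := by
      intro i
      rw [vAbs_le_one_iff]
      by_contra hgt
      exact hmem (Set.mem_iUnion.mpr ⟨i, lt_of_not_ge hgt⟩)
    exact le_antisymm (ciSup_le hle) (hBv1 v)
  have hTfin : (Function.mulSupport fun v => ⨆ i, vAbs v (x i)).Finite :=
    Set.Finite.subset (Set.finite_iUnion fun i => finite_val_gt_one (x i)) hsupp
  set T : Finset (HeightOneSpectrum (𝓞 K)) := hTfin.toFinset with hT
  -- rewrite of the Fin 2 sups
  have hfun2 : ∀ v : HeightOneSpectrum (𝓞 K),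
      (⨆ i, vAbs v (![1, Δ] i)) = max 1 (vAbs v Δ) := by
    intro v
    rw [iSup_fin2]
    simp [vAbs_one]
  have hw2 : ∀ w : InfinitePlace K, (⨆ i, w (![1, Δ] i)) = max 1 (w Δ) := by
    intro w
    rw [iSup_fin2]
    simp
  -- names for products
  set A' : ℝ := ∏ w : InfinitePlace K, (⨆ i, w (x i)) ^ w.mult with hA'
  set F' : ℝ := ∏ᶠ v : HeightOneSpectrum (𝓞 K), ⨆ i, vAbs v (x i) with hF'
  have hF'T : F' = ∏ v ∈ T, ⨆ i, vAbs v (x i) := by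
    rw [hF']
    exact finprod_eq_prod_of_mulSupport_subset _ (by rw [hT, Set.Finite.coe_toFinset])
  have hA'1 : 1 ≤ A' := one_le_finset_prod _ _ fun w _ => one_le_pow₀ (hBw1 w)
  have hF'1 : 1 ≤ F' := by
    rw [hF'T]
    exact one_le_finset_prod _ _ fun v _ => hBv1 v
  have hR0 : (0:ℝ) ≤ A' * F' := by positivity
  -- LHS finite part
  have hsubL : Function.mulSupport (fun v => ⨆ i, vAbs v (![1,Δ] i)) ⊆ (T : Set _) := by
    intro v hv
    rw [hT, Set.Finite.coe_toFinset]
    by_contra hmem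
    apply hv
    have hBv : (⨆ i, vAbs v (x i)) = 1 := Function.notMem_mulSupport.mp hmem
    have h2 := hNon v
    rw [hBv, one_pow] at h2
    show (⨆ i, vAbs v (![1,Δ] i)) = 1
    rw [hfun2 v]
    exact max_eq_left h2
  have hLf : (∏ᶠ v : HeightOneSpectrum (𝓞 K), ⨆ i, vAbs v (![1,Δ] i)) =
      ∏ v ∈ T, max 1 (vAbs v Δ) := by
    rw [finprod_eq_prod_of_mulSupport_subset _ hsubL]
    exact Finset.prod_congr rfl fun v _ => hfun2 v
  -- bounds on each part
  have hInf : (∏ w : InfinitePlace K, (⨆ i, w (![1,Δ] i)) ^ w.mult) ≤ C^D * A'^e := by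
    have step1 : (∏ w : InfinitePlace K, (⨆ i, w (![1,Δ] i)) ^ w.mult) ≤
        ∏ w : InfinitePlace K, (C * (⨆ i, w (x i))^e) ^ w.mult := by
      refine Finset.prod_le_prod (fun w _ => pow_nonneg ?_ _) (fun w _ => ?_)
      · rw [hw2 w]; exact le_trans zero_le_one (le_max_left _ _)
      · refine pow_le_pow_left₀ ?_ ?_ _
        · rw [hw2 w]; exact le_trans zero_le_one (le_max_left _ _)
        · rw [hw2 w]
          refine max_le ?_ (hArch w)
          calc (1:ℝ) = 1 * 1 := by norm_num
            _ ≤ C * (⨆ i, w (x i))^e :=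
              mul_le_mul hC (one_le_pow₀ (hBw1 w)) zero_le_one hC0
    refine step1.trans (le_of_eq ?_)
    have step2 : ∀ w : InfinitePlace K, (C * (⨆ i, w (x i))^e) ^ w.mult =
        C ^ w.mult * ((⨆ i, w (x i)) ^ w.mult)^e := by
      intro w
      rw [mul_pow, ← pow_mul, ← pow_mul, mul_comm e w.mult]
    rw [Finset.prod_congr rfl fun w _ => step2 w, Finset.prod_mul_distrib,
      Finset.prod_pow, Finset.prod_pow_eq_pow_sum, hA']
    congr 1
    rw [hD, ← InfinitePlace.sum_mult_eq]
  have hFin : (∏ᶠ v : HeightOneSpectrum (𝓞 K), ⨆ i, vAbs v (![1,Δ] i)) ≤ F'^e := by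
    rw [hLf, hF'T, ← Finset.prod_pow]
    refine Finset.prod_le_prod (fun v _ => le_trans zero_le_one (le_max_left _ _))
      (fun v _ => max_le (one_le_pow₀ (hBv1 v)) (hNon v))
  -- put everything together
  have hL0 : (0:ℝ) ≤ (∏ w : InfinitePlace K, (⨆ i, w (![1,Δ] i)) ^ w.mult) *
      ∏ᶠ v : HeightOneSpectrum (𝓞 K), ⨆ i, vAbs v (![1,Δ] i) := by
    apply mul_nonneg
    · exact Finset.prod_nonneg fun w _ => pow_nonneg
        (by rw [hw2 w]; exact le_trans zero_le_one (le_max_left _ _)) _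
    · rw [hLf]
      exact Finset.prod_nonneg fun v _ => le_trans zero_le_one (le_max_left _ _)
  have key : (∏ w : InfinitePlace K, (⨆ i, w (![1,Δ] i)) ^ w.mult) *
      (∏ᶠ v : HeightOneSpectrum (𝓞 K), ⨆ i, vAbs v (![1,Δ] i)) ≤ C^D * (A' * F')^e := by
    calc (∏ w : InfinitePlace K, (⨆ i, w (![1,Δ] i)) ^ w.mult) *
        (∏ᶠ v : HeightOneSpectrum (𝓞 K), ⨆ i, vAbs v (![1,Δ] i))
        ≤ (C^D * A'^e) * F'^e := by
          refine mul_le_mul hInf hFin ?_ (by positivity)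
          rw [hLf]
          exact Finset.prod_nonneg fun v _ => le_trans zero_le_one (le_max_left _ _)
      _ = C^D * (A' * F')^e := by rw [mul_pow]; ring
  -- final computation with rpow
  show ((∏ w : InfinitePlace K, (⨆ i, w (![1,Δ] i)) ^ w.mult) *
      ∏ᶠ v : HeightOneSpectrum (𝓞 K), ⨆ i, vAbs v (![1,Δ] i)) ^ ((D:ℝ)⁻¹) ≤
      C * ((A' * F') ^ ((D:ℝ)⁻¹)) ^ e
  calc ((∏ w : InfinitePlace K, (⨆ i, w (![1,Δ] i)) ^ w.mult) *
      ∏ᶠ v : HeightOneSpectrum (𝓞 K), ⨆ i, vAbs v (![1,Δ] i)) ^ ((D:ℝ)⁻¹)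
      ≤ (C^D * (A' * F')^e) ^ ((D:ℝ)⁻¹) :=
        Real.rpow_le_rpow hL0 key (by positivity)
    _ = C * ((A' * F') ^ ((D:ℝ)⁻¹)) ^ e := by
        rw [Real.mul_rpow (by positivity) (by positivity)]
        congr 1
        · rw [← Real.rpow_natCast C D, ← Real.rpow_mul hC0,
            mul_inv_cancel₀ (by exact_mod_cast hDpos.ne'), Real.rpow_one]
        · rw [← Real.rpow_natCast (A' * F') e, ← Real.rpow_mul hR0,
            mul_comm (e:ℝ) ((D:ℝ)⁻¹), Real.rpow_mul hR0, Real.rpow_natCast]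

end DiscAux
namespace DiscAux

open Effective IsDedekindDomain IsDedekindDomain.HeightOneSpectrum NumberField Polynomial
open scoped NNReal

variable {K : Type*} [Field K] [NumberField K]

lemma coeff_sum_form (n : ℕ) (β : Fin (n+1) → K) (k : ℕ) :
    (∑ i : Fin (n+1), Polynomial.C (β i) * Polynomial.X ^ (n - (i:ℕ))).coeff k =
      if h : k ≤ n then β ⟨n - k, by omega⟩ else 0 := by
  rw [Polynomial.finset_sum_coeff]
  simp only [Polynomial.coeff_C_mul_X_pow]
  by_cases h : k ≤ n
  · rw [dif_pos h]
    rw [Finset.sum_eq_single (⟨n-k, by omega⟩ : Fin (n+1))]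
    · rw [if_pos (by simp only []; omega)]
    · intro b _ hb
      rw [if_neg]
      intro hc
      apply hb
      have hb' : (b:ℕ) < n + 1 := b.isLt
      apply Fin.ext
      simp only []
      omega
    · intro hmem
      exact absurd (Finset.mem_univ _) hmem
  · rw [dif_neg h]
    apply Finset.sum_eq_zero
    intro i _
    rw [if_neg]
    omega

end DiscAux

open Effective IsDedekindDomain NumberField in
/-- Height bound for the discriminant of a binary form. -/
theorem disc_height_bound (K : Type*) [Field K] [NumberField K] (n : ℕ) (hn : 2 ≤ n)
    (β : Fin (n + 1) → K) (hΔ : discBF n β ≠ 0) :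
    mulHeight₁ (discBF n β) ≤
      2 ^ (3 * n * (n - 1)) * mulHeight (Fin.cons 1 β) ^ (2 * n - 2) := by
  classical
  have hsplit : discBF n β =
      (if (∑ i : Fin (n+1), Polynomial.C (β i) * Polynomial.X ^ (n - (i:ℕ))).natDegree = n
        then polyDisc (∑ i : Fin (n+1), Polynomial.C (β i) * Polynomial.X ^ (n - (i:ℕ)))
        else if (∑ i : Fin (n+1), Polynomial.C (β i) * Polynomial.X ^ (n - (i:ℕ))) ≠ 0 ∧
            (∑ i : Fin (n+1), Polynomial.C (β i) * Polynomial.X ^ (n - (i:ℕ))).natDegree = n - 1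
          then (∑ i : Fin (n+1), Polynomial.C (β i) * Polynomial.X ^ (n - (i:ℕ))).leadingCoeff ^ 2 *
            polyDisc (∑ i : Fin (n+1), Polynomial.C (β i) * Polynomial.X ^ (n - (i:ℕ)))
          else 0) := rfl
  set g : K[X] := ∑ i : Fin (n+1), Polynomial.C (β i) * Polynomial.X ^ (n - (i:ℕ)) with hg
  have hC : (1:ℝ) ≤ 2 ^ (3*n*(n-1)) := one_le_pow₀ one_le_two
  have hg1 : ∀ w : InfinitePlace K, 1 ≤ ⨆ i, w ((Fin.cons 1 β : Fin (n+2) → K) i) := by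
    intro w
    calc (1:ℝ) = w ((Fin.cons 1 β : Fin (n+2) → K) 0) := by rw [Fin.cons_zero, map_one]
      _ ≤ _ := le_ciSup (f := fun i => w ((Fin.cons 1 β : Fin (n+2) → K) i))
          (Set.Finite.bddAbove (Set.finite_range _)) 0
  have hv1 : ∀ v : IsDedekindDomain.HeightOneSpectrum (𝓞 K),
      1 ≤ ⨆ i, vAbs v ((Fin.cons 1 β : Fin (n+2) → K) i) := by
    intro v
    calc (1:ℝ) = vAbs v ((Fin.cons 1 β : Fin (n+2) → K) 0) := by
          rw [Fin.cons_zero, DiscAux.vAbs_one]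
      _ ≤ _ := le_ciSup (f := fun i => vAbs v ((Fin.cons 1 β : Fin (n+2) → K) i))
          (Set.Finite.bddAbove (Set.finite_range _)) 0
  have hcw : ∀ (w : InfinitePlace K) (k : ℕ),
      w (g.coeff k) ≤ ⨆ i, w ((Fin.cons 1 β : Fin (n+2) → K) i) := by
    intro w k
    rw [hg, DiscAux.coeff_sum_form n β k]
    by_cases h : k ≤ n
    · rw [dif_pos h]
      calc w (β ⟨n-k, by omega⟩)
          = w ((Fin.cons 1 β : Fin (n+2) → K) (⟨n-k, by omega⟩ : Fin (n+1)).succ) := by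
            rw [Fin.cons_succ]
        _ ≤ _ := le_ciSup (f := fun i => w ((Fin.cons 1 β : Fin (n+2) → K) i))
            (Set.Finite.bddAbove (Set.finite_range _)) _
    · rw [dif_neg h, map_zero]
      exact le_trans zero_le_one (hg1 w)
  have hcv : ∀ (v : IsDedekindDomain.HeightOneSpectrum (𝓞 K)) (k : ℕ),
      vAbs v (g.coeff k) ≤ ⨆ i, vAbs v ((Fin.cons 1 β : Fin (n+2) → K) i) := by
    intro v k
    rw [hg, DiscAux.coeff_sum_form n β k]
    by_cases h : k ≤ n
    · rw [dif_pos h]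
      calc vAbs v (β ⟨n-k, by omega⟩)
          = vAbs v ((Fin.cons 1 β : Fin (n+2) → K) (⟨n-k, by omega⟩ : Fin (n+1)).succ) := by
            rw [Fin.cons_succ]
        _ ≤ _ := le_ciSup (f := fun i => vAbs v ((Fin.cons 1 β : Fin (n+2) → K) i))
            (Set.Finite.bddAbove (Set.finite_range _)) _
    · rw [dif_neg h, DiscAux.vAbs_zero]
      exact le_trans zero_le_one (hv1 v)
  have hkey : ∀ m : ℕ, 1 ≤ m → m ≤ n →
      (((2*m-1).factorial * m^(2*m-1) : ℕ) : ℝ) ≤ 2 ^ (3*n*(n-1)) := by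
    intro m hm hmn
    calc (((2*m-1).factorial * m^(2*m-1) : ℕ) : ℝ) ≤ ((2^(3*m*(m-1)) : ℕ) : ℝ) := by
          exact_mod_cast DiscAux.key_nat hm
      _ ≤ ((2^(3*n*(n-1)) : ℕ) : ℝ) := by
          exact_mod_cast Nat.pow_le_pow_right (by norm_num)
            (Nat.mul_le_mul (Nat.mul_le_mul_left 3 hmn) (Nat.sub_le_sub_right hmn 1))
      _ = 2 ^ (3*n*(n-1)) := by push_cast; ring
  by_cases h1 : g.natDegree = n
  · refine DiscAux.height_assembly β (2*n-2) _ hC _ ?_ ?_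
    · intro w
      rw [hsplit, if_pos h1]
      have hb := DiscAux.polyDisc_abs_le w g (hg1 w) (by omega) (hcw w)
      rw [h1] at hb
      exact hb.trans (mul_le_mul_of_nonneg_right (hkey n (by omega) le_rfl)
        (pow_nonneg (le_trans zero_le_one (hg1 w)) _))
    · intro v
      rw [hsplit, if_pos h1]
      have hb := DiscAux.polyDisc_vAbs_le v g (hv1 v) (by omega) (hcv v)
      rwa [h1] at hb
  · by_cases h2 : g ≠ 0 ∧ g.natDegree = n - 1
    · have hdeg : g.natDegree = n - 1 := h2.2
      have hd1 : 1 ≤ g.natDegree := by omega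
      refine DiscAux.height_assembly β (2*n-2) _ hC _ ?_ ?_
      · intro w
        rw [hsplit, if_neg h1, if_pos h2, map_mul, map_pow]
        set B := ⨆ i, w ((Fin.cons 1 β : Fin (n+2) → K) i) with hB
        have hB0 : (0:ℝ) ≤ B := le_trans zero_le_one (hg1 w)
        have hlc : w g.leadingCoeff ≤ B := hcw w g.natDegree
        have hb := DiscAux.polyDisc_abs_le w g (hg1 w) hd1 (hcw w)
        rw [hdeg] at hb
        calc w g.leadingCoeff ^ 2 * w (polyDisc g)
            ≤ B^2 * ((((2*(n-1)-1).factorial * (n-1)^(2*(n-1)-1) : ℕ) : ℝ) *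
              B^(2*(n-1)-2)) :=
              mul_le_mul (pow_le_pow_left₀ (apply_nonneg w _) hlc 2) hb
                (apply_nonneg w _) (pow_nonneg hB0 2)
          _ = (((2*(n-1)-1).factorial * (n-1)^(2*(n-1)-1) : ℕ) : ℝ) *
              B^(2 + (2*(n-1)-2)) := by rw [pow_add]; ring
          _ = (((2*(n-1)-1).factorial * (n-1)^(2*(n-1)-1) : ℕ) : ℝ) * B^(2*n-2) := by
              rw [show 2 + (2*(n-1)-2) = 2*n-2 from by omega]
          _ ≤ 2^(3*n*(n-1)) * B^(2*n-2) :=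
              mul_le_mul_of_nonneg_right (hkey (n-1) (by omega) (by omega))
                (pow_nonneg hB0 _)
      · intro v
        rw [hsplit, if_neg h1, if_pos h2, DiscAux.vAbs_mul, pow_two, DiscAux.vAbs_mul]
        set B := ⨆ i, vAbs v ((Fin.cons 1 β : Fin (n+2) → K) i) with hB
        have hB0 : (0:ℝ) ≤ B := le_trans zero_le_one (hv1 v)
        have hlc : vAbs v g.leadingCoeff ≤ B := hcv v g.natDegree
        have hb := DiscAux.polyDisc_vAbs_le v g (hv1 v) hd1 (hcv v)
        rw [hdeg] at hb
        calc vAbs v g.leadingCoeff * vAbs v g.leadingCoeff * vAbs v (polyDisc g)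
            ≤ (B * B) * B^(2*(n-1)-2) :=
              mul_le_mul (mul_le_mul hlc hlc (DiscAux.vAbs_nonneg v _) hB0) hb
                (DiscAux.vAbs_nonneg v _) (mul_nonneg hB0 hB0)
          _ = B^(2 + (2*(n-1)-2)) := by rw [pow_add]; ring
          _ = B^(2*n-2) := by rw [show 2 + (2*(n-1)-2) = 2*n-2 from by omega]
    · exfalso
      rw [hsplit, if_neg h1, if_neg h2] at hΔ
      exact hΔ rfl
end
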